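/- arXiv:1601.05187 — 2 statements merged into one kernel-verified Lean document; each statement's English description precedes it below -/
import Mathlib

section
/- Two dynamic policies ↣ and ↣' over a common signature are equivalent with respect to ta^◇-security (i.e., every system is ta^◇-secure for ↣ iff it is ta^◇-secure for ↣') if and only if ↣ and ↣' are identical up to inactive domains (they agree on all edges from domains u with dom⁻¹(u) ≠ ∅). -/
open Classical

/-- Binary trees over actions, values of the `ta` purge functions. -/
inductive TATree (A : Type) : Type where
  | eps : TATree A
  | node : TATree A → TATree A → A → TATree A

/-- Run a deterministic system along a trace (newest action at the head of the list). -/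
def runL {S A : Type} (step : S → A → S) (s0 : S) : List A → S
  | [] => s0
  | a :: α => step (runL step s0 α) a

/-- The permissive purge function `ta^◇` for a dynamic policy `P`. -/
noncomputable def taD {D A : Type} (dm : A → D) (P : List A → D → D → Prop) :
    List A → D → TATree A
  | [], _ => TATree.eps
  | a :: α, u =>
    if P α (dm a) u then TATree.node (taD dm P α u) (taD dm P α (dm a)) a
    else taD dm P α u

/-- The unwinding relations: smallest family of equivalence relations on traces
satisfying WSC and DLR with respect to the dynamic policy `P`. -/
inductive Unw {D A : Type} (dm : A → D) (P : List A → D → D → Prop) :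
    D → List A → List A → Prop where
  | refl (u : D) (α : List A) : Unw dm P u α α
  | symm {u : D} {α β : List A} : Unw dm P u α β → Unw dm P u β α
  | trans {u : D} {α β γ : List A} : Unw dm P u α β → Unw dm P u β γ → Unw dm P u α γ
  | dlr (u : D) (α : List A) (a : A) : ¬ P α (dm a) u → Unw dm P u (a :: α) α
  | wsc (u : D) {α β : List A} (a : A) :
      Unw dm P u α β → Unw dm P (dm a) α β → Unw dm P u (a :: α) (a :: β)

/-- The prohibitive purge function `ta^□`, whose condition is distributed knowledge
of the policy edge, interpreted over the Kripke structure given by the unwinding relations. -/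
noncomputable def taB {D A : Type} (dm : A → D) (P : List A → D → D → Prop) :
    List A → D → TATree A
  | [], _ => TATree.eps
  | a :: α, u =>
    if (∀ β, Unw dm P u α β → Unw dm P (dm a) α β → P β (dm a) u) then
      TATree.node (taB dm P α u) (taB dm P α (dm a)) a
    else taB dm P α u

lemma node_ne {A : Type} (t1 t2 : TATree A) (a : A) : TATree.node t1 t2 a ≠ t1 := by
  induction t1 generalizing t2 a with
  | eps => intro h; cases h
  | node l r b ih =>
    intro h
    injection h with h1 h2 h3
    exact ih r b h1

lemma runL_cons {A : Type} (α : List A) :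
    runL (fun s a => a :: s) ([] : List A) α = α := by
  induction α with
  | nil => rfl
  | cons a α ih => simp [runL, ih]

lemma key {D A : Type} (dm : A → D) (Q Q' : List A → D → D → Prop)
    (h : ∀ w (α β : List A), taD dm Q α w = taD dm Q β w → taD dm Q' α w = taD dm Q' β w)
    (a : A) (v : D) (α : List A) (hQ' : Q' α (dm a) v) : Q α (dm a) v := by
  by_contra hn
  have h1 : taD dm Q (a :: α) v = taD dm Q α v := by simp [taD, hn]
  have h2 := h v (a :: α) α h1
  have h3 : taD dm Q' (a :: α) v
      = TATree.node (taD dm Q' α v) (taD dm Q' α (dm a)) a := by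
    simp [taD, hQ']
  rw [h3] at h2
  exact node_ne _ _ _ h2

lemma taD_congr {D A : Type} (dm : A → D) (P P' : List A → D → D → Prop)
    (h : ∀ (α : List A) a v, P α (dm a) v ↔ P' α (dm a) v) :
    ∀ (α : List A) u, taD dm P α u = taD dm P' α u := by
  intro α
  induction α with
  | nil => intro u; rfl
  | cons a α ih =>
    intro u
    by_cases hc : P α (dm a) u
    · have hc' : P' α (dm a) u := (h α a u).mp hc
      simp [taD, hc, hc', ih]
    · have hc' : ¬ P' α (dm a) u := fun hx => hc ((h α a u).mpr hx)
      simp [taD, hc, hc', ih]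

/-- two policies are equivalent with respect to `ta^◇`-security iff they are
identical up to inactive domains. -/
theorem statement_10 {D A : Type} (dm : A → D) (P P' : List A → D → D → Prop)
    (hrefl : ∀ α u, P α u u) (hrefl' : ∀ α u, P' α u u) :
    (∀ (S O : Type) (step : S → A → S) (s0 : S) (obs : D → S → O),
      (∀ u (α β : List A), taD dm P α u = taD dm P β u →
          obs u (runL step s0 α) = obs u (runL step s0 β)) ↔
      (∀ u (α β : List A), taD dm P' α u = taD dm P' β u →
          obs u (runL step s0 α) = obs u (runL step s0 β))) ↔
    (∀ u, (∃ a, dm a = u) → ∀ v (α : List A), P α u v ↔ P' α u v) := by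
  constructor
  · intro hsys u hu v α
    obtain ⟨a, rfl⟩ := hu
    have himp1 : ∀ w (α β : List A), taD dm P' α w = taD dm P' β w →
        taD dm P α w = taD dm P β w := by
      have H := (hsys (List A) (TATree A) (fun s a => a :: s) [] (fun w s => taD dm P s w)).mp
        (by intro w α β h; simp only [runL_cons]; exact h)
      intro w α β hab
      have := H w α β hab
      simpa [runL_cons] using this
    have himp2 : ∀ w (α β : List A), taD dm P α w = taD dm P β w →
        taD dm P' α w = taD dm P' β w := by
      have H := (hsys (List A) (TATree A) (fun s a => a :: s) [] (fun w s => taD dm P' s w)).mpr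
        (by intro w α β h; simp only [runL_cons]; exact h)
      intro w α β hab
      have := H w α β hab
      simpa [runL_cons] using this
    constructor
    · intro hP
      exact key dm P' P himp1 a v α hP
    · intro hP'
      exact key dm P P' himp2 a v α hP'
  · intro h S O step s0 obs
    have heq := taD_congr dm P P' (fun α a v => h (dm a) ⟨a, rfl⟩ v α)
    constructor
    · intro hs u α β hab
      apply hs u α β
      rw [heq, heq]; exact hab
    · intro hs u α β hab
      apply hs u α β
      rw [← heq, ← heq]; exact hab
end

section
/- If ↣ ≤ ↣' and ↣ is local, then any system M that is ta^◇-secure with respect to ↣ is ta^◇-secure with respect to ↣'. -/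
open Classical

theorem taD_key {D A : Type} (dm : A → D) (P P' : List A → D → D → Prop)
    (hle : ∀ (α : List A) u v, P α u v → P' α u v)
    (hloc : ∀ u v (α β : List A), taD dm P α u = taD dm P β u →
        taD dm P α v = taD dm P β v → (P α u v ↔ P β u v)) :
    ∀ n (α β : List A) u, α.length + β.length ≤ n →
      taD dm P' α u = taD dm P' β u → taD dm P α u = taD dm P β u := by
  intro n
  induction n with
  | zero =>
    intro α β u h _
    have hα : α = [] := List.eq_nil_of_length_eq_zero (by omega)
    have hβ : β = [] := List.eq_nil_of_length_eq_zero (by omega)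
    subst hα; subst hβ; rfl
  | succ n ih =>
    intro α β u h he
    match α, β with
    | [], [] => rfl
    | [], b :: β' =>
      by_cases hb : P' β' (dm b) u
      · simp only [taD] at he; rw [if_pos hb] at he; exact absurd he (by simp)
      · simp only [taD] at he ⊢
        rw [if_neg hb] at he
        have hb' : ¬ P β' (dm b) u := fun hp => hb (hle _ _ _ hp)
        rw [if_neg hb']
        exact ih [] β' u (by simp at h ⊢; omega) he
    | a :: α', [] =>
      by_cases ha : P' α' (dm a) u
      · simp only [taD] at he; rw [if_pos ha] at he; exact absurd he (by simp)
      · simp only [taD] at he ⊢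
        rw [if_neg ha] at he
        have ha' : ¬ P α' (dm a) u := fun hp => ha (hle _ _ _ hp)
        rw [if_neg ha']
        exact ih α' [] u (by simp at h ⊢; omega) he
    | a :: α', b :: β' =>
      by_cases ha : P' α' (dm a) u
      · by_cases hb : P' β' (dm b) u
        · rw [taD, taD, if_pos ha, if_pos hb] at he
          injection he with h1 h2 h3
          subst h3
          have k1 : taD dm P α' u = taD dm P β' u :=
            ih α' β' u (by simp at h ⊢; omega) h1
          have k2 : taD dm P α' (dm a) = taD dm P β' (dm a) :=
            ih α' β' (dm a) (by simp at h ⊢; omega) h2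
          have hiff := hloc (dm a) u α' β' k2 k1
          by_cases hp : P α' (dm a) u
          · rw [taD, taD, if_pos hp, if_pos (hiff.mp hp), k1, k2]
          · rw [taD, taD, if_neg hp, if_neg (fun hq => hp (hiff.mpr hq))]
            exact k1
        · rw [show taD dm P' (b :: β') u = taD dm P' β' u by rw [taD, if_neg hb]] at he
          have hb' : ¬ P β' (dm b) u := fun hp => hb (hle _ _ _ hp)
          rw [show taD dm P (b :: β') u = taD dm P β' u by rw [taD, if_neg hb']]
          exact ih _ β' u (by simp at h ⊢; omega) he
      · rw [show taD dm P' (a :: α') u = taD dm P' α' u by rw [taD, if_neg ha]] at he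
        have ha' : ¬ P α' (dm a) u := fun hp => ha (hle _ _ _ hp)
        rw [show taD dm P (a :: α') u = taD dm P α' u by rw [taD, if_neg ha']]
        exact ih α' _ u (by simp at h ⊢; omega) he

/-- if `P ≤ P'` and `P` is local, `ta^◇`-security with respect to `P`
implies `ta^◇`-security with respect to `P'`. -/
theorem statement_14 {D A S O : Type} (dm : A → D) (P P' : List A → D → D → Prop)
    (hrefl : ∀ α u, P α u u)
    (hle : ∀ (α : List A) u v, P α u v → P' α u v)
    (hloc : ∀ u v (α β : List A), taD dm P α u = taD dm P β u →
        taD dm P α v = taD dm P β v → (P α u v ↔ P β u v))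
    (step : S → A → S) (s0 : S) (obs : D → S → O)
    (hsec : ∀ u (α β : List A), taD dm P α u = taD dm P β u →
        obs u (runL step s0 α) = obs u (runL step s0 β)) :
    ∀ u (α β : List A), taD dm P' α u = taD dm P' β u →
        obs u (runL step s0 α) = obs u (runL step s0 β) := by
  intro u α β he
  exact hsec u α β (taD_key dm P P' hle hloc (α.length + β.length) α β u le_rfl he)
end
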